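/- The R_I Hahn polynomials satisfy the three-term recurrence A_n P_{n+1}(x) - (A_n + B_n) P_n(x) + B_n P_{n-1}(x) = -x [ (n+α+1) P_n(x) + (n(α+β+n)/(1-β-n)) P_{n-1}(x) ], where A_n = (n-N)(β+n) and B_n = n(α+β+n), as an identity of polynomials in x. -/

import Mathlib

noncomputable def poch (a : ℝ) (n : ℕ) : ℝ := ∏ i ∈ Finset.range n, (a + i)

/-- The R_I polynomial of Hahn type P_n(x; α, β, N). -/
noncomputable def P (α β : ℝ) (N n : ℕ) (x : ℝ) : ℝ :=
  ∑ k ∈ Finset.range (n + 1),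
    poch (-(n : ℝ)) k * poch (α + 1) k /
      ((Nat.factorial k : ℝ) * poch (-(N : ℝ)) k * poch (1 - β - n) k) * poch (-x) k

lemma poch_succ (a : ℝ) (n : ℕ) : poch a (n+1) = poch a n * (a + n) := by
  simp [poch, Finset.prod_range_succ]

lemma poch_nat_zero (m k : ℕ) (h : m < k) : poch (-(m:ℝ)) k = 0 := by
  apply Finset.prod_eq_zero (Finset.mem_range.mpr h); simp

noncomputable def cc (α β : ℝ) (N m k : ℕ) : ℝ :=
  poch (-(m:ℝ)) k * poch (α+1) k /
    ((Nat.factorial k : ℝ) * poch (-(N:ℝ)) k * poch (1 - β - m) k)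

lemma P_eq (α β : ℝ) (N m : ℕ) (x : ℝ) :
    P α β N m x = ∑ k ∈ Finset.range (m+1), cc α β N m k * poch (-x) k := rfl

lemma cc_zero (α β : ℝ) (N m k : ℕ) (h : m < k) : cc α β N m k = 0 := by
  unfold cc; rw [poch_nat_zero m k h]; simp

lemma sum_range_ext {c : ℕ → ℝ} {K1 K2 : ℕ} (h : K1 ≤ K2)
    (hc : ∀ k, K1 ≤ k → c k = 0) :
    ∑ k ∈ Finset.range K1, c k = ∑ k ∈ Finset.range K2, c k := by
  apply Finset.sum_subset (Finset.range_subset_range.mpr h)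
  intro k _ hk
  exact hc k (by simpa [Finset.mem_range] using hk)

lemma poch_succ' (a : ℝ) (n : ℕ) : poch a (n+1) = a * poch (a+1) n := by
  unfold poch
  rw [Finset.prod_range_succ']
  simp only [Nat.cast_zero, add_zero, Nat.cast_add, Nat.cast_one]
  rw [mul_comm]
  congr 1
  exact Finset.prod_congr rfl (fun i _ => by ring)

lemma poch_shift_down (a : ℝ) (j : ℕ) : poch (a-1) (j+1) = (a-1) * poch a j := by
  rw [poch_succ', sub_add_cancel]

lemma poch_shift_up0 (a : ℝ) (j : ℕ) (ha : a ≠ 0) : poch (a+1) j = poch a j * (a + j) / a := by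
  rw [eq_div_iff ha, mul_comm _ a, ← poch_succ', poch_succ]

lemma poch_shift_up (a : ℝ) (j : ℕ) (ha : a ≠ 0) :
    poch (a+1) (j+1) = poch a j * (a + j) * (a + j + 1) / a := by
  rw [eq_div_iff ha, mul_comm _ a, ← poch_succ']
  have h := poch_succ a (j+1)
  rw [poch_succ a j] at h
  rw [h]; push_cast; ring

set_option maxHeartbeats 2000000 in
theorem stmt14 (N n : ℕ) (α β : ℝ) (hn1 : 1 ≤ n) (hn2 : n + 1 ≤ N)
    (h1 : (1 - β - (n : ℝ)) ≠ 0)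
    (h2 : ∀ m ≤ n + 1, ∀ k ≤ m, poch (1 - β - (m : ℝ)) k ≠ 0)
    (h3 : ∀ k ≤ n + 1, poch (-(N : ℝ)) k ≠ 0) :
    ∀ x : ℝ,
      ((n : ℝ) - N) * (β + n) * P α β N (n + 1) x
        - (((n : ℝ) - N) * (β + n) + (n : ℝ) * (α + β + n)) * P α β N n x
        + (n : ℝ) * (α + β + n) * P α β N (n - 1) x
      = -x * (((n : ℝ) + α + 1) * P α β N n x
          + (n : ℝ) * (α + β + n) / (1 - β - (n : ℝ)) * P α β N (n - 1) x) := by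
  intro x
  set A : ℝ := ((n:ℝ) - N) * (β + n) with hA
  set B : ℝ := (n:ℝ) * (α + β + n) with hB
  set g : ℕ → ℝ := fun k => poch (-x) k with hg
  set D : ℕ → ℝ := fun k => ((n:ℝ) + α + 1) * cc α β N n k + B / (1 - β - n) * cc α β N (n-1) k with hD
  have hcast : ((n-1 : ℕ) : ℝ) = (n:ℝ) - 1 := by
    rw [Nat.cast_sub hn1]; norm_num
  have hn0 : (n:ℝ) ≠ 0 := Nat.cast_ne_zero.mpr (by omega)
  have hn0' : (-(n:ℝ)) ≠ 0 := neg_ne_zero.mpr hn0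
  have hbn : (-β - (n:ℝ)) ≠ 0 := by
    have hb := h2 (n+1) le_rfl 1 (by omega)
    simp only [poch, Finset.prod_range_one, Nat.cast_zero, add_zero] at hb
    push_cast at hb
    intro h; exact hb (by linarith)
  have key : ∀ j : ℕ, j ≤ n →
      A * cc α β N (n+1) (j+1) - (A + B) * cc α β N n (j+1) + B * cc α β N (n-1) (j+1)
        = D j - ((j:ℝ) + 1) * D (j+1) := by
    intro j hj
    have hf : ((j.factorial : ℕ) : ℝ) ≠ 0 := Nat.cast_ne_zero.mpr (Nat.factorial_ne_zero j)
    have hr : poch (-(N:ℝ)) j ≠ 0 := h3 j (by omega)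
    have hq : poch (1 - β - (n:ℝ)) j ≠ 0 := h2 n (by omega) j hj
    have hj1 : ((j:ℝ) + 1) ≠ 0 := by positivity
    have hNj : (-(N:ℝ) + (j:ℝ)) ≠ 0 := by
      have : (j:ℝ) < (N:ℝ) := by exact_mod_cast (by omega : j < N)
      intro h; linarith
    have E1 : poch (-((n + 1 : ℕ) : ℝ)) (j+1) = (-(n:ℝ) - 1) * poch (-(n:ℝ)) j := by
      rw [show (-((n + 1 : ℕ):ℝ)) = (-(n:ℝ)) - 1 by push_cast; ring, poch_shift_down]
    have E2 : poch (1 - β - ((n + 1 : ℕ) : ℝ)) (j+1)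
        = (-β - (n:ℝ)) * poch (1 - β - (n:ℝ)) j := by
      rw [show (1 - β - ((n + 1 : ℕ):ℝ)) = (1 - β - (n:ℝ)) - 1 by push_cast; ring,
        poch_shift_down]
      ring
    have E7 : poch (α+1) (j+1) = poch (α+1) j * (α+1+(j:ℝ)) := poch_succ _ _
    have E8 : poch (-(N:ℝ)) (j+1) = poch (-(N:ℝ)) j * (-(N:ℝ)+(j:ℝ)) := poch_succ _ _
    have E9 : (((j+1).factorial : ℕ) : ℝ) = ((j:ℝ)+1) * ((j.factorial : ℕ) : ℝ) := by
      rw [Nat.factorial_succ]; push_cast; ring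
    have E3 : poch (-(n:ℝ)) (j+1) = poch (-(n:ℝ)) j * (-(n:ℝ)+(j:ℝ)) := poch_succ _ _
    have E4 : poch (1-β-(n:ℝ)) (j+1)
        = poch (1-β-(n:ℝ)) j * (1-β-(n:ℝ)+(j:ℝ)) := poch_succ _ _
    have E10 : poch (-((n-1:ℕ):ℝ)) j
        = poch (-(n:ℝ)) j * (-(n:ℝ)+(j:ℝ)) / (-(n:ℝ)) := by
      rw [show (-((n-1:ℕ):ℝ)) = (-(n:ℝ)) + 1 by rw [hcast]; ring]
      exact poch_shift_up0 _ _ hn0'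
    have E11 : poch (1-β-((n-1:ℕ):ℝ)) j
        = poch (1-β-(n:ℝ)) j * (1-β-(n:ℝ)+(j:ℝ)) / (1-β-(n:ℝ)) := by
      rw [show (1-β-((n-1:ℕ):ℝ)) = (1-β-(n:ℝ)) + 1 by rw [hcast]; ring]
      exact poch_shift_up0 _ _ h1
    rcases lt_trichotomy (j+1) n with hlt | heq | hgt
    · -- generic case j + 1 < n
      have hq1 : (1-β-(n:ℝ)+(j:ℝ)) ≠ 0 := by
        have hx := h2 n (by omega) (j+1) (by omega)
        rw [E4] at hx
        exact right_ne_zero_of_mul hx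
      have E5 : poch (-((n-1:ℕ):ℝ)) (j+1)
          = poch (-(n:ℝ)) j * (-(n:ℝ)+(j:ℝ)) * (-(n:ℝ)+(j:ℝ)+1) / (-(n:ℝ)) := by
        rw [show (-((n-1:ℕ):ℝ)) = (-(n:ℝ)) + 1 by rw [hcast]; ring]
        exact poch_shift_up _ _ hn0'
      have E6 : poch (1-β-((n-1:ℕ):ℝ)) (j+1)
          = poch (1-β-(n:ℝ)) j * (1-β-(n:ℝ)+(j:ℝ)) * (1-β-(n:ℝ)+(j:ℝ)+1) / (1-β-(n:ℝ)) := by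
        rw [show (1-β-((n-1:ℕ):ℝ)) = (1-β-(n:ℝ)) + 1 by rw [hcast]; ring]
        exact poch_shift_up _ _ h1
      have hq2 : (1-β-(n:ℝ)+(j:ℝ)+1) ≠ 0 := by
        have h6 := h2 (n-1) (by omega) (j+1) (by omega)
        rw [E6] at h6
        intro h; exact h6 (by rw [h]; ring)
      -- division-free cleared-denominator approach
      have V1 : cc α β N (n+1) (j+1) * (((j:ℝ)+1) * (-(N:ℝ)+(j:ℝ)) * (-β-(n:ℝ)))
          = cc α β N n j * ((-(n:ℝ)-1) * (α+1+(j:ℝ))) := by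
        simp only [cc]
        rw [E1, E2, E7, E8, E9]
        field_simp
      have V2 : cc α β N n (j+1) * (((j:ℝ)+1) * (-(N:ℝ)+(j:ℝ)) * (1-β-(n:ℝ)+(j:ℝ)))
          = cc α β N n j * ((-(n:ℝ)+(j:ℝ)) * (α+1+(j:ℝ))) := by
        simp only [cc]
        rw [E3, E4, E7, E8, E9]
        field_simp
      have V3 : cc α β N (n-1) (j+1) * ((-(n:ℝ)) * (((j:ℝ)+1) * (-(N:ℝ)+(j:ℝ))
            * (1-β-(n:ℝ)+(j:ℝ)) * (1-β-(n:ℝ)+(j:ℝ)+1)))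
          = cc α β N n j * ((-(n:ℝ)+(j:ℝ)) * (-(n:ℝ)+(j:ℝ)+1) * (1-β-(n:ℝ)) * (α+1+(j:ℝ))) := by
        simp only [cc]
        rw [E5, E6, E7, E8, E9]
        field_simp
      have V3' : B / (1-β-(n:ℝ)) * (cc α β N (n-1) (j+1) * ((-(n:ℝ)) * (((j:ℝ)+1)
            * (-(N:ℝ)+(j:ℝ)) * (1-β-(n:ℝ)+(j:ℝ)) * (1-β-(n:ℝ)+(j:ℝ)+1))))
          = B * (cc α β N n j * ((-(n:ℝ)+(j:ℝ)) * (-(n:ℝ)+(j:ℝ)+1) * (α+1+(j:ℝ)))) := by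
        rw [div_mul_eq_mul_div, mul_comm B, mul_div_assoc, V3]
        field_simp
      have V4' : B / (1-β-(n:ℝ)) * (cc α β N (n-1) j * ((-(n:ℝ)) * (1-β-(n:ℝ)+(j:ℝ))))
          = B * (cc α β N n j * (-(n:ℝ)+(j:ℝ))) := by
        simp only [cc]
        rw [E10, E11]
        field_simp
      have hd : (-(n:ℝ)) * ((j:ℝ)+1) * (-(N:ℝ)+(j:ℝ)) * (-β-(n:ℝ))
          * (1-β-(n:ℝ)+(j:ℝ)) * (1-β-(n:ℝ)+(j:ℝ)+1) ≠ 0 :=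
        mul_ne_zero (mul_ne_zero (mul_ne_zero (mul_ne_zero (mul_ne_zero hn0' hj1) hNj) hbn) hq1) hq2
      apply mul_right_cancel₀ hd
      simp only [hD]
      rw [hB] at V3' V4'
      linear_combination
        (((↑n:ℝ) - ↑N) * (β + ↑n) * ((-(n:ℝ)) * (1-β-(n:ℝ)+(j:ℝ)) * (1-β-(n:ℝ)+(j:ℝ)+1))) * V1
        + ((((j:ℝ)+1) * ((↑n:ℝ) + α + 1) - (((↑n:ℝ) - ↑N) * (β + ↑n) + (↑n:ℝ) * (α + β + ↑n)))
            * ((-(n:ℝ)) * (-β-(n:ℝ)) * (1-β-(n:ℝ)+(j:ℝ)+1))) * V2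
        + ((↑n:ℝ) * (α + β + ↑n) * (-β-(n:ℝ))) * V3
        + (((j:ℝ)+1) * (-β-(n:ℝ))) * V3'
        - ((((j:ℝ)+1) * (-(N:ℝ)+(j:ℝ)) * (-β-(n:ℝ)) * (1-β-(n:ℝ)+(j:ℝ)+1))) * V4'

    · -- case j + 1 = n
      have hjr : (j:ℝ) = (n:ℝ) - 1 := by rw [← heq]; push_cast; ring
      have hq1 : (1-β-(n:ℝ)+(j:ℝ)) ≠ 0 := by
        have hx := h2 n (by omega) (j+1) (by omega)
        rw [E4] at hx
        exact right_ne_zero_of_mul hx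
      simp only [hD]
      rw [cc_zero α β N (n-1) (j+1) (by omega)]
      rw [hA, hB]
      simp only [cc]
      rw [E1, E2, E3, E4, E7, E8, E9, E10, E11]
      have hqb : β ≠ 0 := by
        intro h; apply hq1; rw [h, hjr]; ring
      rw [hjr] at hq1 hNj hj1 ⊢
      field_simp [hf, hr, hq, hbn, hj1, hNj, hn0, hn0', h1, hq1, hqb]
      ring
    · -- case j = n
      have hjn : n = j := by omega
      subst hjn
      simp only [hD]
      rw [cc_zero α β N n (n+1) (by omega), cc_zero α β N (n-1) (n+1) (by omega),
        cc_zero α β N (n-1) n (by omega)]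
      rw [hA, hB]
      simp only [cc]
      rw [E1, E2, E7, E8, E9]
      field_simp [hf, hr, hq, hbn, hj1, hNj, hn0', h1]
      ring
  have hP1 : P α β N (n+1) x = ∑ k ∈ Finset.range (n+2), cc α β N (n+1) k * g k := P_eq ..
  have hP2 : P α β N n x = ∑ k ∈ Finset.range (n+2), cc α β N n k * g k := by
    rw [P_eq]
    exact sum_range_ext (by omega)
      (fun k hk => by rw [cc_zero α β N n k (by omega), zero_mul])
  have hP3' : P α β N (n-1) x = ∑ k ∈ Finset.range (n+1), cc α β N (n-1) k * g k := by
    rw [P_eq, Nat.sub_add_cancel hn1]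
    exact sum_range_ext (by omega)
      (fun k hk => by rw [cc_zero α β N (n-1) k (by omega), zero_mul])
  have hP3 : P α β N (n-1) x = ∑ k ∈ Finset.range (n+2), cc α β N (n-1) k * g k := by
    rw [hP3']
    exact sum_range_ext (by omega)
      (fun k hk => by rw [cc_zero α β N (n-1) k (by omega), zero_mul])
  have hD0 : D (n+1) = 0 := by
    simp only [hD, cc_zero α β N n (n+1) (by omega), cc_zero α β N (n-1) (n+1) (by omega)]
    ring
  have hrhs : -x * (((n : ℝ) + α + 1) * P α β N n x
        + (n : ℝ) * (α + β + n) / (1 - β - (n : ℝ)) * P α β N (n - 1) x)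
      = ∑ k ∈ Finset.range (n+1), D k * (-x * g k) := by
    rw [P_eq, hP3', Finset.mul_sum, Finset.mul_sum, ← Finset.sum_add_distrib, Finset.mul_sum]
    apply Finset.sum_congr rfl
    intro k _
    simp only [hD]; ring
  rw [hrhs, hP1, hP2, hP3]
  rw [Finset.mul_sum, Finset.mul_sum, Finset.mul_sum]
  rw [← Finset.sum_sub_distrib, ← Finset.sum_add_distrib]
  have step1 : ∀ k ∈ Finset.range (n+2),
      A * (cc α β N (n+1) k * g k) - (A + B) * (cc α β N n k * g k)
        + B * (cc α β N (n-1) k * g k)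
      = ((if k = 0 then (0:ℝ) else D (k-1)) - (k:ℝ) * D k) * g k := by
    intro k hk
    match k with
    | 0 =>
      have c1 : ∀ m : ℕ, cc α β N m 0 = 1 := by
        intro m; simp [cc, poch]
      simp [c1]; ring
    | j+1 =>
      have hj : j ≤ n := by simp only [Finset.mem_range] at hk; omega
      have := key j hj
      simp only [if_neg (Nat.succ_ne_zero j), Nat.add_sub_cancel]
      push_cast
      rw [← this]; ring
  rw [Finset.sum_congr rfl step1]
  have hxg : ∀ k : ℕ, -x * g k = g (k+1) - (k:ℝ) * g k := by
    intro k
    simp only [hg, poch_succ]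
    ring
  calc ∑ k ∈ Finset.range (n+2), ((if k = 0 then (0:ℝ) else D (k-1)) - (k:ℝ) * D k) * g k
      = (∑ k ∈ Finset.range (n+2), (if k = 0 then (0:ℝ) else D (k-1)) * g k)
        - ∑ k ∈ Finset.range (n+2), (k:ℝ) * D k * g k := by
        rw [← Finset.sum_sub_distrib]
        exact Finset.sum_congr rfl (fun k _ => by ring)
    _ = (∑ k ∈ Finset.range (n+1), D k * g (k+1))
        - ∑ k ∈ Finset.range (n+1), (k:ℝ) * D k * g k := by
        congr 1
        · rw [show n+2 = (n+1)+1 from rfl, Finset.sum_range_succ']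
          simp only [if_neg (Nat.succ_ne_zero _), Nat.add_sub_cancel, if_pos rfl]
          simp
        · rw [show n+2 = (n+1)+1 from rfl, Finset.sum_range_succ, hD0]
          push_cast
          ring
    _ = ∑ k ∈ Finset.range (n+1), D k * (-x * g k) := by
        rw [← Finset.sum_sub_distrib]
        apply Finset.sum_congr rfl
        intro k _
        rw [hxg k]; ring
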